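/- Two smooth strictly proper scoring rules R and R' on binary outcomes are equivalent (related by a positive affine transformation R'(y,x) = αR(y,x) + β(x) with α > 0) if and only if for all y_1, y_2, θ in [0,1]: R'(y_1,θ) > R'(y_2,θ) ⟺ R(y_1,θ) > R(y_2,θ), where R(y,θ) = θR(y,1)+(1-θ)R(y,0) is the expected score. -/

import Mathlib

/-- Expected score of report `y` under `X ~ Bernoulli(θ)`. -/
noncomputable def expScore (R : ℝ → Bool → ℝ) (y θ : ℝ) : ℝ :=
  θ * R y true + (1 - θ) * R y false

/-- Difference of the `false`-scores of two reports. -/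
def Df (R : ℝ → Bool → ℝ) (y₁ y₂ : ℝ) : ℝ := R y₁ false - R y₂ false

/-- Difference of the score gaps of two reports. -/
def Dd (R : ℝ → Bool → ℝ) (y₁ y₂ : ℝ) : ℝ :=
  (R y₁ true - R y₁ false) - (R y₂ true - R y₂ false)

lemma expScore_diff (R : ℝ → Bool → ℝ) (y₁ y₂ θ : ℝ) :
    expScore R y₁ θ - expScore R y₂ θ = Df R y₁ y₂ + θ * Dd R y₁ y₂ := by
  simp only [expScore, Df, Dd]; ring

/-- Two smooth strictly proper scoring rules on binary outcomes are equivalent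
(related by a positive affine transformation `R' = αR + β(x)`) if and only if they
always agree on the relative accuracy of any pair of reports. -/
theorem equivalent_iff_same_ranking (R R' : ℝ → Bool → ℝ)
    (hRsmooth : ∀ x : Bool, ContDiffOn ℝ 2 (fun y => R y x) (Set.Icc 0 1))
    (hR'smooth : ∀ x : Bool, ContDiffOn ℝ 2 (fun y => R' y x) (Set.Icc 0 1))
    (hRproper : ∀ p ∈ Set.Icc (0:ℝ) 1, ∀ y ∈ Set.Icc (0:ℝ) 1, y ≠ p →
      expScore R p p > expScore R y p)
    (hR'proper : ∀ p ∈ Set.Icc (0:ℝ) 1, ∀ y ∈ Set.Icc (0:ℝ) 1, y ≠ p →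
      expScore R' p p > expScore R' y p) :
    (∃ α : ℝ, 0 < α ∧ ∃ β : Bool → ℝ,
      ∀ y ∈ Set.Icc (0:ℝ) 1, ∀ x : Bool, R' y x = α * R y x + β x) ↔
    (∀ y₁ ∈ Set.Icc (0:ℝ) 1, ∀ y₂ ∈ Set.Icc (0:ℝ) 1, ∀ θ ∈ Set.Icc (0:ℝ) 1,
      (expScore R' y₁ θ > expScore R' y₂ θ ↔ expScore R y₁ θ > expScore R y₂ θ)) := by
  constructor
  · -- forward direction: affine transformation preserves rankings
    rintro ⟨α, hα, β, hβ⟩ y₁ hy₁ y₂ hy₂ θ hθ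
    have e1 := hβ y₁ hy₁
    have e2 := hβ y₂ hy₂
    have h1 : expScore R' y₁ θ - expScore R' y₂ θ
        = α * (expScore R y₁ θ - expScore R y₂ θ) := by
      simp only [expScore, e1 true, e1 false, e2 true, e2 false]; ring
    constructor <;> intro h <;> nlinarith
  · -- backward direction
    intro hrank
    -- rankings agree, hence ties agree
    have heq : ∀ y₁ ∈ Set.Icc (0:ℝ) 1, ∀ y₂ ∈ Set.Icc (0:ℝ) 1, ∀ θ ∈ Set.Icc (0:ℝ) 1,
        expScore R y₁ θ = expScore R y₂ θ → expScore R' y₁ θ = expScore R' y₂ θ := by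
      intro y₁ hy₁ y₂ hy₂ θ hθ h
      rcases lt_trichotomy (expScore R' y₁ θ) (expScore R' y₂ θ) with hc | hc | hc
      · have := (hrank y₂ hy₂ y₁ hy₁ θ hθ).mp hc; linarith
      · exact hc
      · have := (hrank y₁ hy₁ y₂ hy₂ θ hθ).mp hc; linarith
    -- properness facts about a pair y₂ < y₁
    have prop2 : ∀ y₁ ∈ Set.Icc (0:ℝ) 1, ∀ y₂ ∈ Set.Icc (0:ℝ) 1, y₂ < y₁ →
        (0 < Df R y₁ y₂ + y₁ * Dd R y₁ y₂ ∧ Df R y₁ y₂ + y₂ * Dd R y₁ y₂ < 0 ∧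
         0 < Dd R y₁ y₂) ∧
        (0 < Df R' y₁ y₂ + y₁ * Dd R' y₁ y₂ ∧ Df R' y₁ y₂ + y₂ * Dd R' y₁ y₂ < 0 ∧
         0 < Dd R' y₁ y₂) := by
      intro y₁ hy₁ y₂ hy₂ hlt
      have key : ∀ S : ℝ → Bool → ℝ,
          (∀ p ∈ Set.Icc (0:ℝ) 1, ∀ y ∈ Set.Icc (0:ℝ) 1, y ≠ p →
            expScore S p p > expScore S y p) →
          0 < Df S y₁ y₂ + y₁ * Dd S y₁ y₂ ∧ Df S y₁ y₂ + y₂ * Dd S y₁ y₂ < 0 ∧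
          0 < Dd S y₁ y₂ := by
        intro S hS
        have hA := hS y₁ hy₁ y₂ hy₂ (ne_of_lt hlt)
        have hB := hS y₂ hy₂ y₁ hy₁ (ne_of_gt hlt)
        have d1 := expScore_diff S y₁ y₂ y₁
        have d2 := expScore_diff S y₁ y₂ y₂
        have h1 : 0 < Df S y₁ y₂ + y₁ * Dd S y₁ y₂ := by linarith
        have h2 : Df S y₁ y₂ + y₂ * Dd S y₁ y₂ < 0 := by linarith
        refine ⟨h1, h2, ?_⟩
        nlinarith
      exact ⟨key R hRproper, key R' hR'proper⟩
    -- pairwise proportionality (cross-product form)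
    have pair : ∀ y₁ ∈ Set.Icc (0:ℝ) 1, ∀ y₂ ∈ Set.Icc (0:ℝ) 1, y₂ < y₁ →
        Df R' y₁ y₂ * Dd R y₁ y₂ = Df R y₁ y₂ * Dd R' y₁ y₂ := by
      intro y₁ hy₁ y₂ hy₂ hlt
      obtain ⟨⟨hA, hB, hD⟩, ⟨hA', hB', hD'⟩⟩ := prop2 y₁ hy₁ y₂ hy₂ hlt
      set θ₀ : ℝ := -Df R y₁ y₂ / Dd R y₁ y₂ with hθ₀
      have hlow : y₂ < θ₀ := by
        rw [hθ₀, lt_div_iff₀ hD]; linarith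
      have hhigh : θ₀ < y₁ := by
        rw [hθ₀, div_lt_iff₀ hD]; linarith
      have hθ₀mem : θ₀ ∈ Set.Icc (0:ℝ) 1 := ⟨by linarith [hy₂.1], by linarith [hy₁.2]⟩
      have hzero : expScore R y₁ θ₀ = expScore R y₂ θ₀ := by
        have d := expScore_diff R y₁ y₂ θ₀
        have : Df R y₁ y₂ + θ₀ * Dd R y₁ y₂ = 0 := by
          rw [hθ₀]; field_simp; ring
        linarith
      have hzero' := heq y₁ hy₁ y₂ hy₂ θ₀ hθ₀mem hzero
      have d' := expScore_diff R' y₁ y₂ θ₀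
      have h0 : Df R' y₁ y₂ + θ₀ * Dd R' y₁ y₂ = 0 := by linarith
      rw [hθ₀] at h0
      field_simp at h0
      linarith
    -- triple lemma: the pairwise ratio is consistent across adjacent pairs
    have triple : ∀ y₁ ∈ Set.Icc (0:ℝ) 1, ∀ y₃ ∈ Set.Icc (0:ℝ) 1, ∀ y₂ ∈ Set.Icc (0:ℝ) 1,
        y₂ < y₃ → y₃ < y₁ →
        Dd R' y₁ y₃ * Dd R y₃ y₂ = Dd R y₁ y₃ * Dd R' y₃ y₂ := by
      intro y₁ hy₁ y₃ hy₃ y₂ hy₂ h32 h13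
      have h12 : y₂ < y₁ := h32.trans h13
      obtain ⟨⟨_, hB13, hDB⟩, ⟨_, _, hDB'⟩⟩ := prop2 y₁ hy₁ y₃ hy₃ h13
      obtain ⟨⟨hA32, _, hDD⟩, ⟨_, _, hDD'⟩⟩ := prop2 y₃ hy₃ y₂ hy₂ h32
      have e13 := pair y₁ hy₁ y₃ hy₃ h13
      have e32 := pair y₃ hy₃ y₂ hy₂ h32
      have e12 := pair y₁ hy₁ y₂ hy₂ h12
      -- additivity
      have addf : Df R y₁ y₂ = Df R y₁ y₃ + Df R y₃ y₂ := by show _ = _; unfold Df; ring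
      have addd : Dd R y₁ y₂ = Dd R y₁ y₃ + Dd R y₃ y₂ := by show _ = _; unfold Dd; ring
      have addf' : Df R' y₁ y₂ = Df R' y₁ y₃ + Df R' y₃ y₂ := by show _ = _; unfold Df; ring
      have addd' : Dd R' y₁ y₂ = Dd R' y₁ y₃ + Dd R' y₃ y₂ := by show _ = _; unfold Dd; ring
      rw [addf, addd, addf', addd'] at e12
      -- the indifference points of pairs (y₁,y₃) and (y₃,y₂) lie on opposite
      -- sides of y₃, so the cross products differ
      have hne : Df R y₁ y₃ * Dd R y₃ y₂ < Df R y₃ y₂ * Dd R y₁ y₃ := by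
        nlinarith
      -- algebra: (A'B = AB') ∧ (C'D = CD') ∧ ((A'+C')(B+D) = (A+C)(B'+D'))
      -- imply (AD - CB)(B'D - BD') = 0
      have key : (Df R y₁ y₃ * Dd R y₃ y₂ - Df R y₃ y₂ * Dd R y₁ y₃) *
          (Dd R' y₁ y₃ * Dd R y₃ y₂ - Dd R y₁ y₃ * Dd R' y₃ y₂) = 0 := by
        linear_combination (Dd R y₁ y₃ * Dd R y₃ y₂) * e12
          - (Dd R y₁ y₃ * Dd R y₃ y₂ + Dd R y₃ y₂ ^ 2) * e13
          - (Dd R y₁ y₃ * Dd R y₃ y₂ + Dd R y₁ y₃ ^ 2) * e32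
      have hne' : Df R y₁ y₃ * Dd R y₃ y₂ - Df R y₃ y₂ * Dd R y₁ y₃ ≠ 0 := by linarith
      have := mul_eq_zero.mp key
      rcases this with h | h
      · exact absurd h hne'
      · linarith
    -- the global constant
    have h01 : (0:ℝ) ∈ Set.Icc (0:ℝ) 1 := by constructor <;> norm_num
    have h11 : (1:ℝ) ∈ Set.Icc (0:ℝ) 1 := by constructor <;> norm_num
    obtain ⟨⟨_, _, hD10⟩, ⟨_, _, hD10'⟩⟩ := prop2 1 h11 0 h01 (by norm_num)
    set α : ℝ := Dd R' 1 0 / Dd R 1 0 with hα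
    have hαpos : 0 < α := div_pos hD10' hD10
    -- key: for every y ∈ (0,1], Dd R' y 0 = α * Dd R y 0 and Df R' y 0 = α * Df R y 0
    have main : ∀ y ∈ Set.Icc (0:ℝ) 1, 0 < y →
        Dd R' y 0 = α * Dd R y 0 ∧ Df R' y 0 = α * Df R y 0 := by
      intro y hy hypos
      obtain ⟨⟨_, _, hDy⟩, ⟨_, _, hDy'⟩⟩ := prop2 y hy 0 h01 hypos
      have cross : Dd R' 1 0 * Dd R y 0 = Dd R 1 0 * Dd R' y 0 := by
        rcases eq_or_lt_of_le hy.2 with h1 | h1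
        · rw [h1]; ring
        · have t := triple 1 h11 y hy 0 h01 hypos h1
          have addd : Dd R 1 0 = Dd R 1 y + Dd R y 0 := by show _ = _; unfold Dd; ring
          have addd' : Dd R' 1 0 = Dd R' 1 y + Dd R' y 0 := by show _ = _; unfold Dd; ring
          rw [addd, addd']
          linear_combination t
      have hd : Dd R' y 0 = α * Dd R y 0 := by
        rw [hα, div_mul_eq_mul_div, eq_div_iff (ne_of_gt hD10)]
        linear_combination -cross
      refine ⟨hd, ?_⟩
      have p := pair y hy 0 h01 hypos
      rw [hd] at p
      have : Df R' y 0 * Dd R y 0 = (α * Df R y 0) * Dd R y 0 := by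
        linear_combination p
      exact mul_right_cancel₀ (ne_of_gt hDy) this
    refine ⟨α, hαpos, fun x => R' 0 x - α * R 0 x, ?_⟩
    intro y hy x
    rcases eq_or_lt_of_le hy.1 with h0 | h0
    · rw [← h0]; ring
    · obtain ⟨hd, hf⟩ := main y hy h0
      simp only [Df, Dd] at hd hf
      cases x
      · linear_combination hf
      · linear_combination hf + hd
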